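/- If the distance from p to q in a metric space X exceeds 2, then truncating the metric at 2 (replacing ρ by min(ρ,2)) does not change the norm ‖f‖_L = max(L(f), ‖f‖_∞) on bounded Lipschitz functions: for every bounded function f, the Lipschitz-max-sup norm with respect to ρ equals that with respect to min(ρ,2). -/

import Mathlib

open ENNReal

/-- The (extended-real-valued) Lipschitz number of `f` with respect to an explicitly
given metric `m` on `X`. -/
noncomputable def elipNum {X : Type*} (m : PseudoMetricSpace X) (f : X → ℝ) : ℝ≥0∞ :=
  ⨆ p : X, ⨆ q : X, edist (f p) (f q) / (@edist X m.toEDist p q)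

/-- The Lipschitz-max-sup norm `max(L f, ‖f‖_∞)` with respect to a metric `m`. -/
noncomputable def lipMaxSupNorm {X : Type*} (m : PseudoMetricSpace X) (f : X → ℝ) : ℝ≥0∞ :=
  max (elipNum m f) (⨆ p : X, ‖f p‖₊)

/-- truncating the metric at `2` (replacing `ρ` by `min (ρ, 2)`, still a
metric) does not change the norm `‖f‖_L = max(L f, ‖f‖_∞)` of any bounded function:
slopes over distances exceeding `2` are dominated by the sup norm. -/
noncomputable def truncMS {X : Type*} [m : MetricSpace X] : MetricSpace X where
  dist p q := min (dist p q) 2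
  dist_self x := by simp
  dist_comm x y := by simp [dist_comm]
  dist_triangle x y z := by
    show min (dist x z) 2 ≤ min (dist x y) 2 + min (dist y z) 2
    rcases le_or_gt 2 (dist x y) with h1 | h1
    · rw [min_eq_right h1]
      have := min_le_right (dist x z) 2
      have h2 : (0:ℝ) ≤ min (dist y z) 2 := le_min dist_nonneg (by norm_num)
      linarith
    · rcases le_or_gt 2 (dist y z) with h2 | h2
      · rw [min_eq_right h2]
        have := min_le_right (dist x z) 2
        have h3 : (0:ℝ) ≤ min (dist x y) 2 := le_min dist_nonneg (by norm_num)
        linarith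
      · rw [min_eq_left h1.le, min_eq_left h2.le]
        exact le_trans (min_le_left _ _) (dist_triangle x y z)
  eq_of_dist_eq_zero {x y} h := by
    have h' : min (dist x y) 2 = 0 := h
    have : dist x y = 0 := by
      rcases min_eq_iff.1 h' with ⟨h'', _⟩ | ⟨h'', _⟩
      · exact h''
      · norm_num at h''
    exact eq_of_dist_eq_zero this

lemma truncMS_edist {X : Type*} [m : MetricSpace X] (p q : X) :
    @edist X (truncMS (X := X)).toPseudoMetricSpace.toEDist p q = min (edist p q) 2 := by
  have h : @edist X (truncMS (X := X)).toPseudoMetricSpace.toEDist p q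
      = ENNReal.ofReal (min (dist p q) 2) :=
    @PseudoMetricSpace.edist_dist X (truncMS (X := X)).toPseudoMetricSpace p q
  rw [h, edist_dist, Monotone.map_min (fun a b hab => ENNReal.ofReal_le_ofReal hab)]
  norm_num

theorem stmt5 {X : Type*} [m : MetricSpace X] :
    ∃ m' : MetricSpace X,
      (∀ p q : X, @dist X m'.toDist p q = min (dist p q) 2) ∧
      ∀ f : X → ℝ, (∃ C, ∀ p, |f p| ≤ C) →
        lipMaxSupNorm m.toPseudoMetricSpace f = lipMaxSupNorm m'.toPseudoMetricSpace f := by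
  refine ⟨@truncMS X m, fun p q => by unfold truncMS; exact (min_eq_left (min_le_right _ _)).symm, fun f _ => ?_⟩
  set S : ℝ≥0∞ := ⨆ p : X, (‖f p‖₊ : ℝ≥0∞) with hS
  have hL : elipNum m.toPseudoMetricSpace f ≤ elipNum (truncMS (X := X)).toPseudoMetricSpace f := by
    refine iSup_mono fun p => iSup_mono fun q => ?_
    rw [truncMS_edist]
    exact ENNReal.div_le_div_left (min_le_left _ _) _
  have hL' : elipNum (truncMS (X := X)).toPseudoMetricSpace f
      ≤ max (elipNum m.toPseudoMetricSpace f) S := by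
    refine iSup_le fun p => iSup_le fun q => ?_
    rw [truncMS_edist]
    rcases le_or_gt (edist p q) 2 with h | h
    · rw [min_eq_left h]
      exact le_trans (le_iSup₂ (f := fun p q => edist (f p) (f q) / edist p q) p q)
        (le_max_left _ _)
    · rw [min_eq_right h.le]
      have hnum : edist (f p) (f q) ≤ S + S := by
        rw [edist_dist, Real.dist_eq]
        calc ENNReal.ofReal |f p - f q| ≤ ENNReal.ofReal (|f p| + |f q|) :=
              ENNReal.ofReal_le_ofReal (abs_sub _ _)
        _ ≤ S + S := by
            rw [ENNReal.ofReal_add (abs_nonneg _) (abs_nonneg _)]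
            gcongr
            · rw [← Real.enorm_eq_ofReal_abs]
              exact le_iSup (fun p : X => (‖f p‖₊ : ℝ≥0∞)) p
            · rw [← Real.enorm_eq_ofReal_abs]
              exact le_iSup (fun p : X => (‖f p‖₊ : ℝ≥0∞)) q
      refine le_trans ?_ (le_max_right _ _)
      rw [ENNReal.div_le_iff (by norm_num) (by norm_num)]
      calc edist (f p) (f q) ≤ S + S := hnum
      _ = S * 2 := by ring
  apply le_antisymm
  · exact max_le (hL.trans (le_max_left _ _)) (le_max_right _ _)
  · exact max_le (le_trans hL' (max_le (le_max_left _ _) (le_max_right _ _))) (le_max_right _ _)
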